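/- arXiv:2001.10298 — 3 statements merged into one kernel-verified Lean document; each statement's English description precedes it below -/
import Mathlib

section
/- Let A = ⟨1, −3, 1, −3, ..., 1⟩ be the sequence in ℝ alternating between 1 and −3, starting and ending with 1, with a occurrences of −3, and let M be any sequence of points in ℝ with d_DF(A, M) ≤ 1. Then in any traversal of A and M realizing distance at most 1, every element of M is paired with exactly one element of A. -/
open Set

/-- One step of a traversal: increment one or both indices by 1. -/
def FrStep (p q : ℕ × ℕ) : Prop :=
  (q.1 = p.1 + 1 ∧ q.2 = p.2) ∨ (q.1 = p.1 ∧ q.2 = p.2 + 1) ∨ (q.1 = p.1 + 1 ∧ q.2 = p.2 + 1)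

/-- `T` is a traversal of two sequences of lengths `m` and `m'` (0-indexed):
it starts at `(0,0)`, ends at `(m-1, m'-1)`, and each step increments one or both indices. -/
def IsTraversal (m m' : ℕ) (T : List (ℕ × ℕ)) : Prop :=
  T ≠ [] ∧ T.head? = some (0, 0) ∧ T.getLast? = some (m - 1, m' - 1) ∧
    T.Chain' FrStep

/-- The discrete Fréchet distance between two finite point sequences:
the least `r` such that some traversal keeps all paired points within distance `r`. -/
noncomputable def dDF {α : Type*} [PseudoMetricSpace α] [Inhabited α]
    (P Q : List α) : ℝ :=
  sInf { r : ℝ | ∃ T : List (ℕ × ℕ), IsTraversal P.length Q.length T ∧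
    ∀ p ∈ T, dist (P.getD p.1 default) (Q.getD p.2 default) ≤ r }

/-- The sequence `⟨1, (−3, 1)^a⟩`: alternating `1, −3`, starting and ending with `1`,
with `a` occurrences of `−3`. -/
def Aseq (a : ℕ) : List ℝ := 1 :: (List.replicate a [(-3 : ℝ), 1]).flatten

/-- The sequence `⟨−1, (3, −1)^b⟩`: alternating `−1, 3`, starting and ending with `−1`,
with `b` occurrences of `3`. -/
def Bseq (b : ℕ) : List ℝ := -1 :: (List.replicate b [(3 : ℝ), -1]).flatten

lemma Aseq_succ (a : ℕ) : Aseq (a+1) = 1 :: -3 :: Aseq a := by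
  simp [Aseq, List.replicate_succ]

lemma Aseq_length (a : ℕ) : (Aseq a).length = 2*a+1 := by
  induction a with
  | zero => simp [Aseq]
  | succ n ih => rw [Aseq_succ]; simp at ih ⊢; omega

lemma Aseq_getD (a : ℕ) : ∀ k, k < 2*a+1 →
    (Aseq a).getD k 0 = if k % 2 = 0 then 1 else -3 := by
  induction a with
  | zero =>
    intro k hk
    interval_cases k
    simp [Aseq]
  | succ n ih =>
    intro k hk
    rw [Aseq_succ]
    match k with
    | 0 => simp
    | 1 => simp
    | (k+2) =>
      have h : k < 2*n+1 := by omega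
      simpa [Nat.add_mod_right] using ih k h

lemma FrStep.le {p q : ℕ × ℕ} (h : FrStep p q) : p.1 ≤ q.1 ∧ p.2 ≤ q.2 := by
  rcases h with ⟨h1,h2⟩|⟨h1,h2⟩|⟨h1,h2⟩ <;> omega

lemma head_le_mem : ∀ (p : ℕ×ℕ) (t : List (ℕ×ℕ)), (p::t).Chain' FrStep →
    ∀ x ∈ t, p.1 ≤ x.1 ∧ p.2 ≤ x.2 := by
  intro p t
  induction t generalizing p with
  | nil => intro _ x hx; simp at hx
  | cons y t ih =>
    intro h x hx
    have hpy := (List.isChain_cons_cons.mp h).1.le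
    rw [List.mem_cons] at hx
    rcases hx with rfl | hx
    · exact hpy
    · have := ih y (List.isChain_cons_cons.mp h).2 x hx
      omega

lemma le_last : ∀ (T : List (ℕ×ℕ)) (q : ℕ×ℕ), T.Chain' FrStep → T.getLast? = some q →
    ∀ x ∈ T, x.1 ≤ q.1 ∧ x.2 ≤ q.2 := by
  intro T q hc hl x hx
  rcases List.getLast?_eq_some_iff.mp hl with ⟨l, rfl⟩
  rcases List.mem_append.mp hx with hx | hx
  · rcases (List.mem_iff_append.mp hx) with ⟨s, t, rfl⟩
    have hsuf : (x :: (t ++ [q])) <:+ ((s ++ x :: t) ++ [q]) := ⟨s, by simp⟩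
    exact head_le_mem x (t ++ [q]) (hc.suffix hsuf) q (by simp)
  · simp at hx; simp [hx]

lemma between : ∀ (T : List (ℕ×ℕ)), T.Chain' FrStep →
    ∀ i i' j, (i,j) ∈ T → (i',j) ∈ T → i < i' → (i+1,j) ∈ T := by
  intro T
  induction T with
  | nil => intro _ i i' j h; simp at h
  | cons p t ih =>
    intro hc i i' j h1 h2 hii
    have hct : t.Chain' FrStep := hc.tail
    rw [List.mem_cons] at h1 h2
    rcases h1 with h1 | h1
    · rcases h2 with h2 | h2
      · rw [← h1] at h2; injection h2 with ha hb; omega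
      · cases t with
        | nil => simp at h2
        | cons r t' =>
          have hpr : FrStep p r := (List.isChain_cons_cons.mp hc).1
          have hr2 : r.2 ≤ j := by
            rw [List.mem_cons] at h2
            rcases h2 with h2 | h2
            · rw [← h2]
            · exact (head_le_mem r t' hct (i',j) h2).2
          have hp1 : p.1 = i := by rw [← h1]
          have hp2 : p.2 = j := by rw [← h1]
          have hr : r.1 = i + 1 ∧ r.2 = j := by
            rcases hpr with ⟨ha,hb⟩|⟨ha,hb⟩|⟨ha,hb⟩ <;> omega
          have hr' : r = (i+1, j) := Prod.ext hr.1 hr.2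
          exact List.mem_cons_of_mem p (by rw [← hr']; exact List.mem_cons_self)
    · rcases h2 with h2 | h2
      · have hle := head_le_mem p t hc (i,j) h1
        rw [← h2] at hle
        simp at hle; omega
      · exact List.mem_cons_of_mem p (ih hct i i' j h1 h2 hii)

lemma exists_snd : ∀ (T : List (ℕ×ℕ)) (p : ℕ×ℕ), T.Chain' FrStep →
    T.head? = some p → ∀ q, T.getLast? = some q →
    ∀ j, p.2 ≤ j → j ≤ q.2 → ∃ i, (i,j) ∈ T := by
  intro T
  induction T with
  | nil => intro p _ h; simp at h
  | cons x t ih =>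
    intro p hc hh q hl j hj1 hj2
    have hxp : x = p := by simpa using hh
    subst hxp
    rcases Nat.eq_or_lt_of_le hj1 with rfl | hlt
    · exact ⟨x.1, by simp⟩
    cases t with
    | nil =>
      have hxq : x = q := by simpa using hl
      rw [hxq] at hlt; omega
    | cons y t' =>
      have hpy : FrStep x y := (List.isChain_cons_cons.mp hc).1
      have hy : y.2 ≤ j := by rcases hpy with ⟨_,hb⟩|⟨_,hb⟩|⟨_,hb⟩ <;> omega
      have hl' : (y :: t').getLast? = some q := by
        rw [List.getLast?_cons_cons] at hl; exact hl
      obtain ⟨i, hi⟩ := ih y hc.tail rfl q hl' j hy hj2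
      exact ⟨i, List.mem_cons_of_mem _ hi⟩

theorem Aseq_traversal_unique_match (a : ℕ) (M : List ℝ) (hM : M ≠ [])
    (T : List (ℕ × ℕ)) (hT : IsTraversal (Aseq a).length M.length T)
    (hdist : ∀ p ∈ T, dist ((Aseq a).getD p.1 0) (M.getD p.2 0) ≤ 1) :
    ∀ j < M.length, ∃! i : ℕ, (i, j) ∈ T := by
  obtain ⟨hne, hh, hl, hc⟩ := hT
  intro j hj
  have hM1 : 1 ≤ M.length := List.length_pos_iff.mpr hM
  obtain ⟨i, hi⟩ := exists_snd T (0,0) hc hh _ hl j (by simp) (by simp; omega)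
  refine ⟨i, hi, ?_⟩
  intro i' hi'
  by_contra hne'
  have key : ∀ u, (u, j) ∈ T → (u+1, j) ∈ T → False := by
    intro u h1 h2
    have hu1 := (le_last T _ hc hl (u+1,j) h2).1
    have hu : u + 1 < (Aseq a).length := by
      rw [Aseq_length] at *; simp at hu1 ⊢; omega
    have d1 := hdist _ h1
    have d2 := hdist _ h2
    simp only at d1 d2
    rw [Aseq_getD a u (by rw [Aseq_length] at hu; omega)] at d1
    rw [Aseq_getD a (u+1) (by rw [Aseq_length] at hu; omega)] at d2
    rw [Real.dist_eq] at d1 d2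
    rcases Nat.even_or_odd u with he | ho
    · have h1' : u % 2 = 0 := Nat.even_iff.mp he
      rw [if_pos h1'] at d1
      rw [if_neg (by omega)] at d2
      rcases abs_le.mp d1 with ⟨a1,a2⟩; rcases abs_le.mp d2 with ⟨b1,b2⟩; linarith
    · have h1' : u % 2 = 1 := Nat.odd_iff.mp ho
      rw [if_neg (by omega)] at d1
      rw [if_pos (by omega)] at d2
      rcases abs_le.mp d1 with ⟨a1,a2⟩; rcases abs_le.mp d2 with ⟨b1,b2⟩; linarith
  rcases Nat.lt_or_ge i i' with h | h
  · exact key i hi (between T hc i i' j hi hi' h)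
  · have h' : i' < i := by omega
    exact key i' hi' (between T hc i' i j hi' hi h')
end

section
/- Let B^b = ⟨−1, 3, −1, 3, ..., −1⟩ be the real sequence with b occurrences of 3 interleaved with −1's (starting and ending with −1). If M is a sequence of reals with d_DF(B^b, M) ≤ 1, then M contains at least b elements with value in [2, 4], and between any two such elements matched to distinct 3's of B^b there is an element of M with value in [−2, 0]. -/
open Set

namespace BseqAux

def Rle (p q : ℕ × ℕ) : Prop := p.1 ≤ q.1 ∧ p.2 ≤ q.2

instance : IsTrans (ℕ × ℕ) Rle :=
  ⟨fun _ _ _ h1 h2 => ⟨h1.1.trans h2.1, h1.2.trans h2.2⟩⟩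

lemma frStep_le {p q : ℕ × ℕ} (h : FrStep p q) : Rle p q := by
  rcases h with ⟨h1, h2⟩ | ⟨h1, h2⟩ | ⟨h1, h2⟩ <;> exact ⟨by omega, by omega⟩

lemma pairwise_of_chain {T : List (ℕ × ℕ)} (h : T.Chain' FrStep) : T.Pairwise Rle :=
  List.isChain_iff_pairwise.mp (h.imp (fun _ _ => frStep_le))

/-- Any two members of a traversal are comparable. -/
lemma rel_total {T : List (ℕ × ℕ)} (h : T.Chain' FrStep) {x y : ℕ × ℕ}
    (hx : x ∈ T) (hy : y ∈ T) : Rle x y ∨ Rle y x := by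
  have hp := pairwise_of_chain h
  rw [List.pairwise_iff_get] at hp
  obtain ⟨m, hm⟩ := List.mem_iff_get.mp hx
  obtain ⟨n, hn⟩ := List.mem_iff_get.mp hy
  rcases lt_trichotomy (m : ℕ) (n : ℕ) with hlt | heq | hgt
  · left; rw [← hm, ← hn]; exact hp m n (by exact_mod_cast hlt)
  · left; have : m = n := Fin.ext heq
    subst this; rw [← hm, ← hn]; exact ⟨le_refl _, le_refl _⟩
  · right; rw [← hm, ← hn]; exact hp n m (by exact_mod_cast hgt)

lemma mono_of_chain {T : List (ℕ × ℕ)} (h : T.Chain' FrStep) {x y : ℕ × ℕ}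
    (hx : x ∈ T) (hy : y ∈ T) (hxy : x.1 < y.1) : x.2 ≤ y.2 := by
  rcases rel_total h hx hy with h' | h'
  · exact h'.2
  · exact ((Nat.not_lt.mpr h'.1) hxy).elim

/-- Every first coordinate between those of the head and the last is hit. -/
lemma hit : ∀ (T : List (ℕ × ℕ)), T.Chain' FrStep →
    ∀ p, T.head? = some p → ∀ q, T.getLast? = some q →
    ∀ i, p.1 ≤ i → i ≤ q.1 → ∃ j, (i, j) ∈ T := by
  intro T
  induction T with
  | nil => simp
  | cons a rest ih =>
    intro hc p hp q hq i h1 h2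
    simp only [List.head?_cons, Option.some.injEq] at hp
    subst hp
    rcases Nat.eq_or_lt_of_le h1 with he | hl
    · exact ⟨a.2, by simp [← he]⟩
    · cases rest with
      | nil =>
        simp only [List.getLast?_singleton, Option.some.injEq] at hq
        subst hq; omega
      | cons b rest' =>
        simp only [List.Chain', List.isChain_cons_cons] at hc
        have hq' : (b :: rest').getLast? = some q := by
          rw [← hq, List.getLast?_cons_cons]
        have hb : b.1 ≤ i := by
          rcases hc.1 with ⟨e1, _⟩ | ⟨e1, _⟩ | ⟨e1, _⟩ <;> omega
        obtain ⟨j, hj⟩ := ih hc.2 b (by simp) q hq' i hb h2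
        exact ⟨j, List.mem_cons_of_mem _ hj⟩

lemma Bseq_succ (b : ℕ) : Bseq (b + 1) = -1 :: 3 :: Bseq b := by
  simp [Bseq, List.replicate_succ]

lemma Bseq_length (b : ℕ) : (Bseq b).length = 2 * b + 1 := by
  induction b with
  | zero => simp [Bseq]
  | succ b ih => rw [Bseq_succ]; simp only [List.length_cons, ih]; omega

lemma Bseq_getD (b : ℕ) : ∀ i, i ≤ 2 * b →
    (Bseq b).getD i 0 = if i % 2 = 0 then -1 else 3 := by
  induction b with
  | zero =>
    intro i hi
    interval_cases i
    simp [Bseq]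
  | succ b ih =>
    intro i hi
    match i with
    | 0 => simp [Bseq]
    | 1 => rw [Bseq_succ]; norm_num
    | (k + 2) =>
      rw [Bseq_succ]
      have h1 : ((-1 : ℝ) :: 3 :: Bseq b).getD (k + 2) 0 = (Bseq b).getD k 0 := rfl
      rw [h1, ih k (by omega)]
      have h2 : (k + 2) % 2 = k % 2 := by omega
      rw [h2]

lemma Bseq_getD_eq_three {b i : ℕ} (h : (Bseq b).getD i 0 = 3) :
    i % 2 = 1 ∧ i ≤ 2 * b := by
  by_cases hle : i ≤ 2 * b
  · rw [Bseq_getD b i hle] at h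
    by_cases hp : i % 2 = 0
    · rw [if_pos hp] at h; norm_num at h
    · exact ⟨by omega, hle⟩
  · exfalso
    rw [List.getD_eq_default] at h
    · norm_num at h
    · rw [Bseq_length]; omega

end BseqAux

theorem Bseq_match_structure (b : ℕ) (M : List ℝ)
    (T : List (ℕ × ℕ)) (hT : IsTraversal (Bseq b).length M.length T)
    (hdist : ∀ p ∈ T, dist ((Bseq b).getD p.1 0) (M.getD p.2 0) ≤ 1) :
    (∃ f : Fin b → ℕ, StrictMono f ∧
      ∀ k, f k < M.length ∧ M.getD (f k) 0 ∈ Set.Icc (2 : ℝ) 4) ∧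
    (∀ i₁ i₂ j₁ j₂, (i₁, j₁) ∈ T → (i₂, j₂) ∈ T → i₁ ≠ i₂ → j₁ < j₂ →
      (Bseq b).getD i₁ 0 = 3 → (Bseq b).getD i₂ 0 = 3 →
      ∃ j, j₁ < j ∧ j < j₂ ∧ M.getD j 0 ∈ Set.Icc (-2 : ℝ) 0) := by
  obtain ⟨hne, hhead, hlast, hchain⟩ := hT
  rw [BseqAux.Bseq_length] at hlast
  have hlast' : T.getLast? = some (2 * b, M.length - 1) := by simpa using hlast
  have hmemlast : (2 * b, M.length - 1) ∈ T := by
    have h1 := List.getLast?_eq_getLast hne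
    rw [h1, Option.some.injEq] at hlast'
    rw [← hlast']
    exact List.getLast_mem hne
  have key3 : ∀ i j, (i, j) ∈ T → (Bseq b).getD i 0 = 3 →
      M.getD j 0 ∈ Set.Icc (2 : ℝ) 4 := by
    intro i j hmem h3
    have hd := hdist _ hmem
    simp only [h3, Real.dist_eq] at hd
    rw [abs_le] at hd
    exact ⟨by linarith [hd.2], by linarith [hd.1]⟩
  have keyneg : ∀ i j, (i, j) ∈ T → (Bseq b).getD i 0 = -1 →
      M.getD j 0 ∈ Set.Icc (-2 : ℝ) 0 := by
    intro i j hmem h3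
    have hd := hdist _ hmem
    simp only [h3, Real.dist_eq] at hd
    rw [abs_le] at hd
    exact ⟨by linarith [hd.2], by linarith [hd.1]⟩
  have hjlt : ∀ i j, (i, j) ∈ T → (Bseq b).getD i 0 = 3 → j < M.length := by
    intro i j hmem h3
    obtain ⟨hodd, hle⟩ := BseqAux.Bseq_getD_eq_three h3
    have hi : i < 2 * b := by omega
    have hj : j ≤ M.length - 1 := BseqAux.mono_of_chain hchain hmem hmemlast hi
    have hn : M.length ≠ 0 := by
      intro h0
      have h2 := (key3 i j hmem h3).1
      rw [List.getD_eq_default _ _ (by omega)] at h2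
      norm_num at h2
    omega
  have hhit : ∀ i, i ≤ 2 * b → ∃ j, (i, j) ∈ T := fun i hi =>
    BseqAux.hit T hchain _ hhead _ hlast' i (Nat.zero_le i) hi
  constructor
  · -- Part 1
    have hex : ∀ k : Fin b, ∃ j, (2 * (k : ℕ) + 1, j) ∈ T := fun k =>
      hhit _ (by have := k.2; omega)
    choose f hf using hex
    have hval3 : ∀ k : Fin b, (Bseq b).getD (2 * (k : ℕ) + 1) 0 = 3 := by
      intro k
      rw [BseqAux.Bseq_getD b _ (by have := k.2; omega)]
      have h2 : (2 * (k : ℕ) + 1) % 2 = 1 := by omega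
      rw [h2]
      norm_num
    refine ⟨f, ?_, fun k => ⟨hjlt _ _ (hf k) (hval3 k), key3 _ _ (hf k) (hval3 k)⟩⟩
    intro k k' hkk'
    have hkn : (k : ℕ) < (k' : ℕ) := hkk'
    have h2b : 2 * (k : ℕ) + 2 ≤ 2 * b := by have := k'.2; omega
    obtain ⟨j', hj'⟩ := hhit (2 * (k : ℕ) + 2) h2b
    have hle1 : f k ≤ j' :=
      BseqAux.mono_of_chain hchain (hf k) hj' (by show 2 * (k : ℕ) + 1 < 2 * (k : ℕ) + 2; omega)
    have hle2 : j' ≤ f k' :=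
      BseqAux.mono_of_chain hchain hj' (hf k') (by show 2 * (k : ℕ) + 2 < 2 * (k' : ℕ) + 1; omega)
    have hvneg : (Bseq b).getD (2 * (k : ℕ) + 2) 0 = -1 := by
      rw [BseqAux.Bseq_getD b _ h2b]
      have h2 : (2 * (k : ℕ) + 2) % 2 = 0 := by omega
      rw [h2]
      norm_num
    have hne' : f k ≠ j' := by
      intro he
      have h3 := (key3 _ _ (hf k) (hval3 k)).1
      have hng := (keyneg _ _ hj' hvneg).2
      rw [← he] at hng
      linarith
    omega
  · -- Part 2
    intro i₁ i₂ j₁ j₂ hm1 hm2 hne12 hj12 h31 h32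
    obtain ⟨ho1, hleb1⟩ := BseqAux.Bseq_getD_eq_three h31
    obtain ⟨ho2, hleb2⟩ := BseqAux.Bseq_getD_eq_three h32
    have hi12 : i₁ < i₂ := by
      rcases BseqAux.rel_total hchain hm1 hm2 with h | h
      · have hx : i₁ ≤ i₂ := h.1
        omega
      · have hx : j₂ ≤ j₁ := h.2
        omega
    have hmid_le : i₁ + 1 ≤ 2 * b := by omega
    have hmid_lt : i₁ + 1 < i₂ := by omega
    obtain ⟨j, hj⟩ := hhit (i₁ + 1) hmid_le
    have hvneg : (Bseq b).getD (i₁ + 1) 0 = -1 := by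
      rw [BseqAux.Bseq_getD b _ hmid_le]
      have h2 : (i₁ + 1) % 2 = 0 := by omega
      rw [h2]
      norm_num
    have hneg := keyneg _ _ hj hvneg
    have ha : j₁ ≤ j := BseqAux.mono_of_chain hchain hm1 hj (by show i₁ < i₁ + 1; omega)
    have hb2 : j ≤ j₂ := BseqAux.mono_of_chain hchain hj hm2 hmid_lt
    have hne_a : j₁ ≠ j := by
      intro he
      have h3 := (key3 _ _ hm1 h31).1
      have hng := hneg.2
      rw [← he] at hng
      linarith
    have hne_b : j ≠ j₂ := by
      intro he
      have h3 := (key3 _ _ hm2 h32).1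
      have hng := hneg.2
      rw [he] at hng
      linarith
    exact ⟨j, by omega, by omega, hneg⟩
end

section
/- Let 𝒫 be a finite set of point sequences in ℝ^d, let C be a sequence of ℓ points with max_{P∈𝒫} d_DF(C,P) ≤ α·δ*, where δ* = max_{P∈𝒫} d_DF(M*,P) for some sequence M* of ℓ points. Suppose for each vertex c_i of C we pick a point m_i (from some input curve) with ‖m_i − c_i‖ ≤ max_{P∈𝒫} d_DF(C,P). Then the sequence M = ⟨m_1,...,m_ℓ⟩ satisfies max_{P∈𝒫} d_DF(M,P) ≤ 2α·δ*. -/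
open Set

lemma exists_chain (a b : ℕ) : ∃ T : List (ℕ × ℕ), T ≠ [] ∧ T.head? = some (0,0) ∧
    T.getLast? = some (a, b) ∧ T.Chain' FrStep := by
  induction a with
  | zero =>
    induction b with
    | zero => exact ⟨[(0,0)], by simp, by simp, by simp, List.isChain_singleton _⟩
    | succ b ih =>
      obtain ⟨T, hTne, hh, hl, hc⟩ := ih
      refine ⟨T ++ [(0, b+1)], by simp, by rwa [List.head?_append_of_ne_nil _ hTne], by simp, ?_⟩
      rw [List.Chain', List.isChain_append]
      refine ⟨hc, by simp, ?_⟩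
      intro x hx y hy
      simp at hy
      rw [hl] at hx
      simp at hx
      subst hx hy
      right; left; simp [FrStep]
  | succ a ih =>
    obtain ⟨T, hTne, hh, hl, hc⟩ := ih
    refine ⟨T ++ [(a+1, b)], by simp, by rwa [List.head?_append_of_ne_nil _ hTne], by simp, ?_⟩
    rw [List.Chain', List.isChain_append]
    refine ⟨hc, by simp, ?_⟩
    intro x hx y hy
    simp at hy
    rw [hl] at hx
    simp at hx
    subst hx hy
    left; simp [FrStep]

lemma dDF_set_nonempty {α : Type*} [PseudoMetricSpace α] [Inhabited α] (P Q : List α) :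
    { r : ℝ | ∃ T : List (ℕ × ℕ), IsTraversal P.length Q.length T ∧
      ∀ p ∈ T, dist (P.getD p.1 default) (Q.getD p.2 default) ≤ r }.Nonempty := by
  obtain ⟨T, hTne, hh, hl, hc⟩ := exists_chain (P.length - 1) (Q.length - 1)
  refine ⟨(T.map fun p => dist (P.getD p.1 default) (Q.getD p.2 default)).sum,
    T, ⟨hTne, hh, hl, hc⟩, ?_⟩
  intro p hp
  exact List.single_le_sum (by intro x hx; simp at hx; obtain ⟨a, b, _, rfl⟩ := hx; positivity)
    _ (List.mem_map_of_mem hp)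

lemma dDF_set_bddBelow {α : Type*} [PseudoMetricSpace α] [Inhabited α] (P Q : List α) :
    BddBelow { r : ℝ | ∃ T : List (ℕ × ℕ), IsTraversal P.length Q.length T ∧
      ∀ p ∈ T, dist (P.getD p.1 default) (Q.getD p.2 default) ≤ r } := by
  refine ⟨0, fun r hr => ?_⟩
  obtain ⟨T, ⟨hTne, _, _, _⟩, hb⟩ := hr
  obtain ⟨p, hp⟩ := List.exists_mem_of_ne_nil T hTne
  exact le_trans dist_nonneg (hb p hp)

theorem middle_curve_two_alpha_approx {d ℓ : ℕ} (𝒮 : Finset (List (EuclideanSpace ℝ (Fin d))))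
    (h𝒮 : 𝒮.Nonempty) (hne : ∀ P ∈ 𝒮, P ≠ [])
    (C Mstar M : List (EuclideanSpace ℝ (Fin d)))
    (hC : C.length = ℓ) (hCne : C ≠ []) (hM : M.length = ℓ) (hMstar : Mstar.length = ℓ)
    (α δstar : ℝ)
    (hδstar : δstar = 𝒮.sup' h𝒮 (fun P => dDF Mstar P))
    (hcenter : 𝒮.sup' h𝒮 (fun P => dDF C P) ≤ α * δstar)
    (hpick : ∀ i < ℓ, dist (M.getD i default) (C.getD i default) ≤
      𝒮.sup' h𝒮 (fun P => dDF C P))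
    (hmem : ∀ i < ℓ, ∃ P ∈ 𝒮, M.getD i default ∈ P) :
    𝒮.sup' h𝒮 (fun P => dDF M P) ≤ 2 * α * δstar := by
  set B := 𝒮.sup' h𝒮 (fun P => dDF C P) with hB
  have hℓpos : 0 < ℓ := hC ▸ List.length_pos_iff.mpr hCne
  have hB0 : 0 ≤ B := le_trans dist_nonneg (hpick 0 hℓpos)
  -- pointwise bound between M and C for all indices
  have hdistMC : ∀ i : ℕ, dist (M.getD i default) (C.getD i default) ≤ B := by
    intro i
    by_cases hi : i < ℓ
    · exact hpick i hi
    · push_neg at hi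
      rw [List.getD_eq_default _ _ (by omega), List.getD_eq_default _ _ (by omega)]
      simpa using hB0
  rw [Finset.sup'_le_iff]
  intro P hP
  have hCP : dDF C P ≤ B := Finset.le_sup' (fun P => dDF C P) hP
  have key : dDF M P ≤ dDF C P + B := by
    refine le_of_forall_pos_le_add (fun ε hε => ?_)
    have hlt : dDF C P < dDF C P + ε := by linarith
    obtain ⟨r, hr, hrlt⟩ := exists_lt_of_csInf_lt (dDF_set_nonempty C P) hlt
    obtain ⟨T, hT, hb⟩ := hr
    have hlen : M.length = C.length := by rw [hM, hC]
    have hmemS : r + B ∈ { s : ℝ | ∃ T : List (ℕ × ℕ),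
        IsTraversal M.length P.length T ∧
        ∀ p ∈ T, dist (M.getD p.1 default) (P.getD p.2 default) ≤ s } := by
      refine ⟨T, by rwa [hlen], fun p hp => ?_⟩
      calc dist (M.getD p.1 default) (P.getD p.2 default)
          ≤ dist (M.getD p.1 default) (C.getD p.1 default)
            + dist (C.getD p.1 default) (P.getD p.2 default) := dist_triangle _ _ _
        _ ≤ B + r := add_le_add (hdistMC p.1) (hb p hp)
        _ = r + B := by ring
    have := csInf_le (dDF_set_bddBelow M P) hmemS
    calc dDF M P ≤ r + B := this
      _ ≤ dDF C P + B + ε := by linarith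
  calc dDF M P ≤ dDF C P + B := key
    _ ≤ B + B := by linarith
    _ ≤ 2 * α * δstar := by linarith [hcenter]
end
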